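/- Let φ : ℝⁿ → ℝ be convex, f : ℝⁿ → ℝ differentiable at x with r(x) := x − prox_φ(x − ∇f(x)) ≠ 0, and let G be a symmetric n×n matrix with ⟨d, G d⟩ ≥ μ‖d‖² for all d, where μ := ν‖r(x)‖^δ with ν ≥ ν_min > 0 and δ ∈ (0,1]. Let x̄ be the unique minimizer of q̂(y) := f(x) + ⟨∇f(x), y − x⟩ + (1/2)⟨y − x, G(y − x)⟩ + φ(y), define R(y) := y − prox_φ(y − ∇f(x) − G(y − x)), and let x̂ satisfy ‖R(x̂)‖ ≤ θ‖r(x)‖^{1+τ} with θ > 0 and τ ≥ δ. Then μ‖x̂ − x̄‖ ≤ (1 + ‖G‖)‖R(x̂)‖, and consequently ‖x̂ − x̄‖ ≤ ν_min⁻¹ θ (1 + ‖G‖) ‖r(x)‖^{1+τ−δ}. -/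

import Mathlib

open scoped RealInnerProductSpace

noncomputable section

/-- The proximity operator `prox_g(z)`. -/
noncomputable def proxPt {n : ℕ} (g : EuclideanSpace ℝ (Fin n) → ℝ)
    (z : EuclideanSpace ℝ (Fin n)) : EuclideanSpace ℝ (Fin n) :=
  Classical.epsilon fun p => ∀ y, g p + (1 / 2) * ‖p - z‖ ^ 2 ≤ g y + (1 / 2) * ‖y - z‖ ^ 2

lemma helper_limit {A B C : ℝ} (hC : 0 ≤ C)
    (h : ∀ t : ℝ, 0 < t → t ≤ 1 → A ≤ B + t * C) : A ≤ B := by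
  refine le_of_forall_pos_le_add fun ε hε => ?_
  rcases le_or_gt C ε with h1 | h1
  · have := h 1 one_pos le_rfl; linarith
  · have hC' : 0 < C := hε.trans h1
    have := h (ε / C) (by positivity) (by rw [div_le_one hC']; linarith)
    rw [div_mul_cancel₀ _ (ne_of_gt hC')] at this
    exact this

lemma prox_exists {n : ℕ} (φ : EuclideanSpace ℝ (Fin n) → ℝ)
    (hφ : ConvexOn ℝ Set.univ φ) (z : EuclideanSpace ℝ (Fin n)) :
    ∃ p, ∀ y, φ p + (1 / 2) * ‖p - z‖ ^ 2 ≤ φ y + (1 / 2) * ‖y - z‖ ^ 2 := by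
  have hcont : Continuous φ := by
    have := hφ.continuousOn isOpen_univ
    exact continuousOn_univ.mp this
  obtain ⟨w, hw, hmin⟩ := (isCompact_closedBall z 1).exists_isMinOn
    ⟨z, Metric.mem_closedBall_self zero_le_one⟩ hcont.continuousOn
  set c : ℝ := φ z - φ w with hc
  have hc0 : 0 ≤ c := sub_nonneg.2 (hmin (Metric.mem_closedBall_self zero_le_one))
  have hlin : ∀ y : EuclideanSpace ℝ (Fin n), 1 ≤ ‖y - z‖ → φ z - ‖y - z‖ * c ≤ φ y := by
    intro y hs
    set s := ‖y - z‖ with hsdef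
    have hs0 : 0 < s := lt_of_lt_of_le one_pos hs
    have ha : (0:ℝ) ≤ 1 - s⁻¹ := by
      have : s⁻¹ ≤ 1 := by rw [inv_le_one_iff₀]; right; exact hs
      linarith
    have hb : (0:ℝ) ≤ s⁻¹ := le_of_lt (inv_pos.2 hs0)
    have hconv := hφ.2 (Set.mem_univ z) (Set.mem_univ y) ha hb (by ring)
    simp only [smul_eq_mul] at hconv
    have hu : (1 - s⁻¹) • z + s⁻¹ • y = z + s⁻¹ • (y - z) := by module
    rw [hu] at hconv
    have huball : z + s⁻¹ • (y - z) ∈ Metric.closedBall z 1 := by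
      simp only [Metric.mem_closedBall, dist_eq_norm, add_sub_cancel_left, norm_smul,
        Real.norm_eq_abs, abs_of_pos (inv_pos.2 hs0)]
      rw [← hsdef, inv_mul_cancel₀ (ne_of_gt hs0)]
    have hwu := hmin huball
    have hle : φ w ≤ (1 - s⁻¹) * φ z + s⁻¹ * φ y := le_trans hwu hconv
    have h2 : s * φ w ≤ s * ((1 - s⁻¹) * φ z + s⁻¹ * φ y) :=
      mul_le_mul_of_nonneg_left hle (le_of_lt hs0)
    have hse : s * s⁻¹ = 1 := mul_inv_cancel₀ (ne_of_gt hs0)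
    have he : s * ((1 - s⁻¹) * φ z + s⁻¹ * φ y)
        = s * φ z - (s * s⁻¹) * φ z + (s * s⁻¹) * φ y := by ring
    rw [he, hse] at h2
    rw [hc]
    nlinarith [h2]
  have hhcont : Continuous (fun y : EuclideanSpace ℝ (Fin n) =>
      φ y + (1 / 2) * ‖y - z‖ ^ 2) :=
    hcont.add (continuous_const.mul ((continuous_id.sub continuous_const).norm.pow 2))
  have key : ∀ y : EuclideanSpace ℝ (Fin n), max 1 (2 * c) ≤ ‖y - z‖ →
      φ z + (1 / 2) * ‖z - z‖ ^ 2 ≤ φ y + (1 / 2) * ‖y - z‖ ^ 2 := by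
    intro y hy
    have h1 : 1 ≤ ‖y - z‖ := le_trans (le_max_left _ _) hy
    have h2 : 2 * c ≤ ‖y - z‖ := le_trans (le_max_right _ _) hy
    have := hlin y h1
    have hn : (0:ℝ) ≤ ‖y - z‖ := norm_nonneg _
    simp only [sub_self, norm_zero]
    nlinarith [sq_nonneg (‖y - z‖ - 2 * c)]
  obtain ⟨p, hp⟩ := hhcont.exists_forall_le' z (by
    filter_upwards [tendsto_norm_cocompact_atTop.eventually_ge_atTop
      (max 1 (2 * c) + ‖z‖)] with y hy
    apply key
    have := norm_sub_norm_le y z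
    linarith)
  exact ⟨p, hp⟩

/-- The variational inequality characterizing the prox point. -/
lemma proxPt_ineq {n : ℕ} (φ : EuclideanSpace ℝ (Fin n) → ℝ)
    (hφ : ConvexOn ℝ Set.univ φ) (z : EuclideanSpace ℝ (Fin n)) :
    ∀ y, ⟪z - proxPt φ z, y - proxPt φ z⟫ ≤ φ y - φ (proxPt φ z) := by
  intro y
  set p := proxPt φ z with hpdef
  have hp : ∀ y, φ p + (1 / 2) * ‖p - z‖ ^ 2 ≤ φ y + (1 / 2) * ‖y - z‖ ^ 2 :=
    Classical.epsilon_spec (prox_exists φ hφ z)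
  have hinner : ⟪z - p, y - p⟫ = -⟪p - z, y - p⟫ := by
    rw [← neg_sub p z, inner_neg_left]
  rw [hinner]
  apply helper_limit (C := (1/2) * ‖y - p‖ ^ 2) (by positivity)
  intro t ht0 ht1
  have hconv := hφ.2 (Set.mem_univ p) (Set.mem_univ y)
    (show (0:ℝ) ≤ 1 - t by linarith) (le_of_lt ht0) (by ring)
  simp only [smul_eq_mul] at hconv
  have hcomb : (1 - t) • p + t • y = p + t • (y - p) := by module
  rw [hcomb] at hconv
  set I : ℝ := ⟪p - z, y - p⟫ with hI
  have hexp : ‖p + t • (y - p) - z‖ ^ 2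
      = ‖p - z‖ ^ 2 + 2 * (t * I) + t ^ 2 * ‖y - p‖ ^ 2 := by
    have h4 : p + t • (y - p) - z = (p - z) + t • (y - p) := by module
    rw [h4, @norm_add_sq_real, real_inner_smul_right, norm_smul,
      Real.norm_eq_abs, abs_of_pos ht0, mul_pow, hI]
  have hq := hp (p + t • (y - p))
  rw [hexp] at hq
  have h0 : 0 ≤ t * (φ y - φ p) + t * I + t ^ 2 * ((1/2) * ‖y - p‖ ^ 2) := by nlinarith [hq, hconv]
  have h3 : t * (-I) ≤ t * (φ y - φ p + t * (1 / 2 * ‖y - p‖ ^ 2)) := by nlinarith [h0]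
  exact (mul_le_mul_iff_right₀ ht0).mp h3

set_option maxHeartbeats 1000000 in
/-- With `μ = ν‖r(x)‖^δ`, `ν ≥ ν_min > 0`, `δ ∈ (0,1]`, `G` symmetric and `μ`-coercive, `x̄`
the minimizer of the regularized model `q̂`, and `x̂` with `‖R(x̂)‖ ≤ θ‖r(x)‖^{1+τ}` (`θ > 0`,
`τ ≥ δ`): `μ‖x̂ − x̄‖ ≤ (1 + ‖G‖)‖R(x̂)‖` and
`‖x̂ − x̄‖ ≤ ν_min⁻¹ θ (1 + ‖G‖) ‖r(x)‖^{1+τ−δ}`. -/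
theorem stmt_12 {n : ℕ} (f φ : EuclideanSpace ℝ (Fin n) → ℝ)
    (hφ : ConvexOn ℝ Set.univ φ)
    (x : EuclideanSpace ℝ (Fin n)) (gx : EuclideanSpace ℝ (Fin n))
    (hf : HasGradientAt f gx x)
    (rx : EuclideanSpace ℝ (Fin n)) (hrx : rx = x - proxPt φ (x - gx)) (hrne : rx ≠ 0)
    (ν νmin δ : ℝ) (hνmin : 0 < νmin) (hν : νmin ≤ ν) (hδ0 : 0 < δ) (hδ1 : δ ≤ 1)
    (μ : ℝ) (hμ : μ = ν * ‖rx‖ ^ δ)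
    (G : EuclideanSpace ℝ (Fin n) →L[ℝ] EuclideanSpace ℝ (Fin n))
    (hGsym : ∀ u v, ⟪G u, v⟫ = ⟪u, G v⟫)
    (hGcoer : ∀ d, μ * ‖d‖ ^ 2 ≤ ⟪d, G d⟫)
    (qhat : EuclideanSpace ℝ (Fin n) → ℝ)
    (hqhat : ∀ y, qhat y = f x + ⟪gx, y - x⟫ + (1 / 2) * ⟪y - x, G (y - x)⟫ + φ y)
    (xbar : EuclideanSpace ℝ (Fin n)) (hxbar : ∀ y, qhat xbar ≤ qhat y)
    (R : EuclideanSpace ℝ (Fin n) → EuclideanSpace ℝ (Fin n))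
    (hR : ∀ y, R y = y - proxPt φ (y - gx - G (y - x)))
    (θ τ : ℝ) (hθ : 0 < θ) (hτ : δ ≤ τ)
    (xhat : EuclideanSpace ℝ (Fin n)) (hin : ‖R xhat‖ ≤ θ * ‖rx‖ ^ (1 + τ)) :
    μ * ‖xhat - xbar‖ ≤ (1 + ‖G‖) * ‖R xhat‖ ∧
    ‖xhat - xbar‖ ≤ νmin⁻¹ * θ * (1 + ‖G‖) * ‖rx‖ ^ (1 + τ - δ) := by
  have hrpos : (0:ℝ) < ‖rx‖ := norm_pos_iff.mpr hrne
  have hν0 : 0 < ν := hνmin.trans_le hν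
  have hμpos : 0 < μ := by
    rw [hμ]; exact mul_pos hν0 (Real.rpow_pos_of_pos hrpos δ)
  -- first-order optimality of xbar
  have hopt : ∀ y, 0 ≤ ⟪gx + G (xbar - x), y - xbar⟫ + φ y - φ xbar := by
    intro y
    have hC : 0 ≤ (1/2) * ⟪y - xbar, G (y - xbar)⟫ := by
      have h1 := hGcoer (y - xbar)
      have h2 : 0 ≤ μ * ‖y - xbar‖ ^ 2 := mul_nonneg hμpos.le (by positivity)
      linarith
    have key : -(⟪gx + G (xbar - x), y - xbar⟫ + φ y - φ xbar) ≤ 0 := by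
      apply helper_limit hC
      intro t ht0 ht1
      have hq := hxbar (xbar + t • (y - xbar))
      rw [hqhat, hqhat] at hq
      have hconv := hφ.2 (Set.mem_univ xbar) (Set.mem_univ y)
        (show (0:ℝ) ≤ 1 - t by linarith) (le_of_lt ht0) (by ring)
      simp only [smul_eq_mul] at hconv
      rw [show (1 - t) • xbar + t • y = xbar + t • (y - xbar) from by module] at hconv
      rw [show xbar + t • (y - xbar) - x = (xbar - x) + t • (y - xbar) from by module] at hq
      rw [inner_add_right, real_inner_smul_right] at hq
      have hGq : ⟪(xbar - x) + t • (y - xbar), G ((xbar - x) + t • (y - xbar))⟫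
          = ⟪xbar - x, G (xbar - x)⟫ + 2 * t * ⟪G (xbar - x), y - xbar⟫
            + t ^ 2 * ⟪y - xbar, G (y - xbar)⟫ := by
        rw [map_add, map_smul, inner_add_left, inner_add_right, inner_add_right,
          real_inner_smul_left, real_inner_smul_right, real_inner_smul_left,
          real_inner_smul_right]
        rw [show ⟪xbar - x, G (y - xbar)⟫ = ⟪G (xbar - x), y - xbar⟫ from (hGsym _ _).symm]
        rw [real_inner_comm (y - xbar) (G (xbar - x))]
        ring
      rw [hGq] at hq
      rw [inner_add_left]
      have h0 : 0 ≤ t * ⟪gx, y - xbar⟫ + t * ⟪G (xbar - x), y - xbar⟫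
          + t ^ 2 * ((1/2) * ⟪y - xbar, G (y - xbar)⟫) + t * (φ y - φ xbar) := by
        nlinarith [hq, hconv]
      have h3 : t * (-(⟪gx, y - xbar⟫ + ⟪G (xbar - x), y - xbar⟫ + φ y - φ xbar))
          ≤ t * (0 + t * ((1/2) * ⟪y - xbar, G (y - xbar)⟫)) := by nlinarith [h0]
      exact (mul_le_mul_iff_right₀ ht0).mp h3
    linarith [key]
  -- prox inequality at xhat
  set z : EuclideanSpace ℝ (Fin n) := xhat - gx - G (xhat - x) with hz
  set phat : EuclideanSpace ℝ (Fin n) := proxPt φ z with hphat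
  have hRx : R xhat = xhat - phat := hR xhat
  set ρ : EuclideanSpace ℝ (Fin n) := xhat - phat with hρ
  set d : EuclideanSpace ℝ (Fin n) := xhat - xbar with hd
  have hprox := proxPt_ineq φ hφ z xbar
  rw [← hphat] at hprox
  have hopt' := hopt phat
  clear_value z phat ρ d
  have hkey : ⟪ρ - G d, ρ - d⟫ ≤ (0:ℝ) := by
    have hneg : ⟪gx + G (xbar - x), phat - xbar⟫ = -⟪gx + G (xbar - x), xbar - phat⟫ := by
      rw [← inner_neg_right]; congr 1; module
    have hadd : ⟪z - phat, xbar - phat⟫ + ⟪gx + G (xbar - x), xbar - phat⟫ ≤ 0 := by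
      rw [hneg] at hopt'; linarith
    calc ⟪ρ - G d, ρ - d⟫
        = ⟪(z - phat) + (gx + G (xbar - x)), xbar - phat⟫ := by
          congr 1
          · have hG : G (xhat - x) = G (xhat - xbar) + G (xbar - x) := by
              rw [← map_add]; congr 1; module
            rw [hz, hρ, hd, hG]; module
          · rw [hρ, hd]; module
      _ = ⟪z - phat, xbar - phat⟫ + ⟪gx + G (xbar - x), xbar - phat⟫ := inner_add_left _ _ _
      _ ≤ 0 := hadd
  have hexp : ‖ρ‖ ^ 2 - ⟪ρ, d⟫ - ⟪G d, ρ⟫ + ⟪G d, d⟫ ≤ 0 := by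
    have e : ⟪ρ - G d, ρ - d⟫
        = ⟪ρ, ρ⟫ - ⟪ρ, d⟫ - ⟪G d, ρ⟫ + ⟪G d, d⟫ := by
      rw [inner_sub_left, inner_sub_right, inner_sub_right]; ring
    rw [e, real_inner_self_eq_norm_sq] at hkey
    linarith
  have hb1 : ⟪ρ, d⟫ ≤ ‖ρ‖ * ‖d‖ := real_inner_le_norm _ _
  have hb2 : ⟪G d, ρ⟫ ≤ ‖G‖ * ‖d‖ * ‖ρ‖ :=
    le_trans (real_inner_le_norm _ _) (mul_le_mul_of_nonneg_right (G.le_opNorm d) (norm_nonneg _))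
  have hcomm : ⟪G d, d⟫ = ⟪d, G d⟫ := real_inner_comm _ _
  have hcoer := hGcoer d
  have hprod : μ * ‖d‖ ^ 2 ≤ (1 + ‖G‖) * ‖ρ‖ * ‖d‖ := by nlinarith
  have part1 : μ * ‖d‖ ≤ (1 + ‖G‖) * ‖ρ‖ := by
    rcases eq_or_lt_of_le (norm_nonneg d) with hd0 | hd0
    · rw [← hd0, mul_zero]
      have : (0:ℝ) ≤ 1 + ‖G‖ := by positivity
      positivity
    · nlinarith [hprod, hd0]
  have hGpos : (0:ℝ) < 1 + ‖G‖ := by positivity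
  refine ⟨by rw [hRx]; exact part1, ?_⟩
  have chain : μ * ‖d‖ ≤ (1 + ‖G‖) * (θ * ‖rx‖ ^ (1 + τ)) := by
    calc μ * ‖d‖ ≤ (1 + ‖G‖) * ‖ρ‖ := part1
    _ ≤ (1 + ‖G‖) * (θ * ‖rx‖ ^ (1 + τ)) := by
        apply mul_le_mul_of_nonneg_left _ hGpos.le
        rw [← hRx]; exact hin
  have hsplit : ‖rx‖ ^ (1 + τ) = ‖rx‖ ^ (1 + τ - δ) * ‖rx‖ ^ δ := by
    rw [← Real.rpow_add hrpos]; ring_nf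
  have hA : (0:ℝ) < ‖rx‖ ^ (1 + τ - δ) := Real.rpow_pos_of_pos hrpos _
  have hB : (0:ℝ) < ‖rx‖ ^ δ := Real.rpow_pos_of_pos hrpos _
  have h1 : 1 ≤ ν * νmin⁻¹ := by
    rw [← div_eq_mul_inv]; exact (one_le_div hνmin).mpr hν
  have hstep : (1 + ‖G‖) * (θ * ‖rx‖ ^ (1 + τ))
      ≤ μ * (νmin⁻¹ * θ * (1 + ‖G‖) * ‖rx‖ ^ (1 + τ - δ)) := by
    rw [hμ, hsplit]
    have hP : 0 < θ * ((1 + ‖G‖) * (‖rx‖ ^ (1 + τ - δ) * ‖rx‖ ^ δ)) := by positivity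
    nlinarith [hP, h1]
  have := chain.trans hstep
  exact (mul_le_mul_iff_right₀ hμpos).mp this
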